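/- Let (P,≤,',0,1) be a complemented poset. Then for all x,y ∈ P: (x + 1) + 1 = {x} (the outer + being the symmetric difference of the subset x + 1 and the singleton {1}), x + y = x' + y', and x + y' = x' + y. -/
import Mathlib


/-- Lower bounds of a set in a preorder. -/
def LB {P : Type*} [Preorder P] (A : Set P) : Set P := {x | ∀ a ∈ A, x ≤ a}

/-- Upper bounds of a set in a preorder. -/
def UB {P : Type*} [Preorder P] (A : Set P) : Set P := {x | ∀ a ∈ A, a ≤ x}

/-- The set of maximal elements of a set. -/
def MaxS {P : Type*} [Preorder P] (A : Set P) : Set P :=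
  {x | x ∈ A ∧ ∀ y ∈ A, x ≤ y → y = x}

/-- The set of minimal elements of a set. -/
def MinS {P : Type*} [Preorder P] (A : Set P) : Set P :=
  {x | x ∈ A ∧ ∀ y ∈ A, y ≤ x → y = x}

/-- The symmetric difference A + B := Min U(Max L(A' ∪ B) ∪ Max L(A ∪ B')) in a
poset with a complementation map c. -/
def symdiff {P : Type*} [Preorder P] (c : P → P) (A B : Set P) : Set P :=
  MinS (UB (MaxS (LB ((c '' A) ∪ B)) ∪ MaxS (LB (A ∪ (c '' B)))))

lemma key {P : Type*} [Preorder P] (c : P → P) (a b : P) :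
    symdiff c {a} {b} = MinS (UB (MaxS (LB {c a, b}) ∪ MaxS (LB {a, c b}))) := by
  unfold symdiff
  rw [Set.image_singleton, Set.image_singleton, Set.singleton_union, Set.singleton_union]

lemma MaxS_Iic {P : Type*} [PartialOrder P] (a : P) : MaxS (Set.Iic a) = {a} := by
  ext x
  simp only [MaxS, Set.mem_setOf_eq, Set.mem_Iic, Set.mem_singleton_iff]
  constructor
  · rintro ⟨h1, h2⟩; exact (h2 a le_rfl h1).symm
  · rintro rfl; exact ⟨le_rfl, fun y hy hxy => le_antisymm hy hxy⟩

lemma MinS_Ici {P : Type*} [PartialOrder P] (a : P) : MinS (Set.Ici a) = {a} := by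
  ext x
  simp only [MinS, Set.mem_setOf_eq, Set.mem_Ici, Set.mem_singleton_iff]
  constructor
  · rintro ⟨h1, h2⟩; exact (h2 a le_rfl h1).symm
  · rintro rfl; exact ⟨le_rfl, fun y hy hxy => le_antisymm hxy hy⟩

lemma MaxS_singleton {P : Type*} [PartialOrder P] (a : P) : MaxS ({a} : Set P) = {a} := by
  ext x
  simp only [MaxS, Set.mem_setOf_eq, Set.mem_singleton_iff]
  constructor
  · rintro ⟨rfl, _⟩; rfl
  · rintro rfl; exact ⟨rfl, fun y hy _ => hy⟩

lemma symdiff_top {P : Type*} [PartialOrder P] [BoundedOrder P] (c : P → P)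
    (hctop : c ⊤ = ⊥) (a : P) : symdiff c {a} {(⊤ : P)} = {c a} := by
  rw [key, hctop]
  have h1 : LB ({c a, ⊤} : Set P) = Set.Iic (c a) := by
    ext z; simp [LB]
  have h2 : LB ({a, ⊥} : Set P) = {(⊥ : P)} := by
    ext z; simp only [LB, Set.mem_setOf_eq, Set.mem_insert_iff, Set.mem_singleton_iff]
    constructor
    · intro h; exact le_bot_iff.mp (h ⊥ (Or.inr rfl))
    · rintro rfl a' ha'; rcases ha' with rfl | rfl
      · exact bot_le
      · exact le_rfl
  have h3 : UB ({c a} ∪ {(⊥ : P)} : Set P) = Set.Ici (c a) := by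
    ext z; simp [UB]
  rw [h1, h2, MaxS_Iic, MaxS_singleton, h3, MinS_Ici]

theorem stmt_9 {P : Type*} [PartialOrder P] [BoundedOrder P] (c : P → P)
    (hanti : ∀ x y : P, x ≤ y → c y ≤ c x)
    (hinv : ∀ x : P, c (c x) = x)
    (hcompL : ∀ x : P, LB {x, c x} = {(⊥ : P)})
    (hcompU : ∀ x : P, UB {x, c x} = {(⊤ : P)}) :
    ∀ x y : P,
      symdiff c (symdiff c {x} {(⊤ : P)}) {(⊤ : P)} = {x} ∧
      symdiff c {x} {y} = symdiff c {c x} {c y} ∧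
      symdiff c {x} {c y} = symdiff c {c x} {y} := by
  have hctop : c ⊤ = ⊥ := by
    have : c ⊤ ∈ LB ({⊤, c ⊤} : Set P) := by
      intro a ha; rcases ha with rfl | ha
      · exact le_top
      · simp at ha; rw [ha]
    rw [hcompL] at this; exact this
  intro x y
  refine ⟨?_, ?_, ?_⟩
  · rw [symdiff_top c hctop, symdiff_top c hctop, hinv]
  · rw [key, key, hinv, hinv, Set.union_comm]
  · rw [key, key, hinv, hinv, Set.union_comm]
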